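/- arXiv:math/0108221 — 2 statements merged into one kernel-verified Lean document; each statement's English description precedes it below -/
import Mathlib

section
/- In an algebra containing elements a, b satisfying a₁ a₂ = R₂₁ a₂ a₁, a₁ b₂ = R₂₁ b₂ R'₁₂ a₁, the reflection equation b₁ R'₂₁ b₂ R̄₁₂ = R₂₁⁻¹ b₂ R'₁₂ b₁ R̄₂₁ (equivalently R₁₂ b₁ R'₂₁ b₂ = b₂ R'₁₂ b₁ R̄₂₁), and the Yang–Baxter/unitarity conditions for R, the elements ã(k) := ½(a(k) + b(k) a(−k)) satisfy the exchange relation ã₁(k₁) ã₂(k₂) = R₂₁(k₂,k₁) ã₂(k₂) ã₁(k₁). -/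
open Matrix

/-- Operators on the tensor product of two auxiliary spaces. -/
abbrev TwoLeg (N : ℕ) (α : Type*) := Matrix (Fin N × Fin N) (Fin N × Fin N) α

/-- Conjugation by the flip operator: `flipM M = P ∘ M ∘ P`. -/
def flipM {N : ℕ} {α : Type*} (M : TwoLeg N α) : TwoLeg N α :=
  Matrix.of fun p q => M (p.2, p.1) (q.2, q.1)

/-- Embedding of an `N×N` matrix into auxiliary space 1: `M ↦ M ⊗ I`. -/
def leg1 {N : ℕ} {α : Type*} [MulZeroOneClass α] (M : Matrix (Fin N) (Fin N) α) :
    TwoLeg N α :=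
  Matrix.of fun p q => if p.2 = q.2 then M p.1 q.1 else 0

/-- Embedding of an `N×N` matrix into auxiliary space 2: `M ↦ I ⊗ M`. -/
def leg2 {N : ℕ} {α : Type*} [MulZeroOneClass α] (M : Matrix (Fin N) (Fin N) α) :
    TwoLeg N α :=
  Matrix.of fun p q => if p.1 = q.1 then M p.2 q.2 else 0

/-- Map a complex matrix to a matrix over the algebra `A`. -/
def cmap {N : ℕ} (A : Type*) [Ring A] [Algebra ℂ A] (M : TwoLeg N ℂ) : TwoLeg N A :=
  M.map (algebraMap ℂ A)

/-- The matrix of reflection generators `b(k) = (bᵢⱼ(k))`. -/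
def bmat {N : ℕ} {A : Type*} (b : Fin N → Fin N → ℝ → A) (k : ℝ) :
    Matrix (Fin N) (Fin N) A :=
  Matrix.of fun i j => b i j k

/-- The boundary generators `ã(k) = ½(a(k) + b(k) a(−k))`. -/
noncomputable def tilA {N : ℕ} {A : Type*} [Ring A] [Algebra ℂ A]
    (a : Fin N → ℝ → A) (b : Fin N → Fin N → ℝ → A) (i : Fin N) (k : ℝ) : A :=
  ((2 : ℂ)⁻¹) • (a i k + ∑ j : Fin N, b i j k * a j (-k))


section Aux

variable {N : ℕ} {A : Type*} [Ring A] [Algebra ℂ A]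

lemma flipM_mul {α : Type*} [NonUnitalNonAssocSemiring α] [Fintype (Fin N)]
    (M M' : TwoLeg N α) : flipM (M * M') = flipM M * flipM M' := by
  ext p q
  simp only [flipM, Matrix.mul_apply, Matrix.of_apply]
  exact (Fintype.sum_equiv (Equiv.prodComm _ _) _ _ (fun r => rfl)).symm

lemma flipM_one {α : Type*} [MulZeroOneClass α] [DecidableEq (Fin N)] :
    flipM (1 : TwoLeg N α) = 1 := by
  ext p q
  simp only [flipM, Matrix.of_apply, Matrix.one_apply, Prod.ext_iff]
  aesop

lemma cmap_mul (M M' : TwoLeg N ℂ) :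
    cmap A (M * M') = cmap A M * cmap A M' := by
  simpa [cmap] using Matrix.map_mul (M := M) (N := M') (f := algebraMap ℂ A)

lemma cmap_one : cmap A (1 : TwoLeg N ℂ) = 1 := by
  simp [cmap, Matrix.map_one]

end Aux

section Aux2

variable {N : ℕ} {A : Type*} [Ring A] [Algebra ℂ A]

lemma alg_mul (c : ℂ) (x : A) : algebraMap ℂ A c * x = c • x :=
  (Algebra.smul_def c x).symm

lemma mul_alg (c : ℂ) (x : A) : x * algebraMap ℂ A c = c • x := by
  rw [← Algebra.commutes, ← Algebra.smul_def]

/-- action of a matrix over `A` on a vector of elements of `A`. -/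
def actA {N : ℕ} {A : Type*} [Ring A] (M : TwoLeg N A)
    (v : Fin N × Fin N → A) : Fin N × Fin N → A :=
  fun p => ∑ q, M p q * v q

lemma actA_mul (M M' : TwoLeg N A) (v : Fin N × Fin N → A) :
    actA (M * M') v = actA M (actA M' v) := by
  funext p
  simp only [actA, Matrix.mul_apply, Finset.sum_mul, Finset.mul_sum, mul_assoc]
  exact Finset.sum_comm

end Aux2

section Units

variable {N : ℕ} {A : Type*} [Ring A] [Algebra ℂ A]
variable (R : ℝ → ℝ → TwoLeg N ℂ)
variable (hunit : ∀ k₁ k₂ : ℝ, R k₁ k₂ * flipM (R k₂ k₁) = 1)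

include hunit in
lemma cA_unit₁ (s t : ℝ) : cmap A (R s t) * cmap A (flipM (R t s)) = 1 := by
  rw [← cmap_mul, hunit, cmap_one]

include hunit in
lemma cA_unit₂ (s t : ℝ) : cmap A (flipM (R t s)) * cmap A (R s t) = 1 := by
  have h := congrArg flipM (hunit t s)
  rw [flipM_mul, flipM_one] at h
  have h2 : flipM (flipM (R s t)) = R s t := rfl
  rw [h2] at h
  rw [← cmap_mul, h, cmap_one]

end Units

section Core

variable {N : ℕ} {A : Type*} [Ring A] [Algebra ℂ A]
variable (R : ℝ → ℝ → TwoLeg N ℂ)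
variable (a : Fin N → ℝ → A) (b : Fin N → Fin N → ℝ → A)

/-- `a(t) ⊗ a(s)` in reversed product order, vector indexed by (leg1,leg2). -/
def vaa (s t : ℝ) : Fin N × Fin N → A := fun q => a q.2 t * a q.1 s

omit [Algebra ℂ A] in
lemma actA_leg1 (M : Matrix (Fin N) (Fin N) A) (v : Fin N × Fin N → A)
    (p : Fin N × Fin N) :
    actA (leg1 M) v p = ∑ m, M p.1 m * v (m, p.2) := by
  simp [actA, leg1, Fintype.sum_prod_type, ite_mul, Finset.sum_comm (γ := Fin N)]

omit [Algebra ℂ A] in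
lemma actA_leg2 (M : Matrix (Fin N) (Fin N) A) (v : Fin N × Fin N → A)
    (p : Fin N × Fin N) :
    actA (leg2 M) v p = ∑ n, M p.2 n * v (p.1, n) := by
  simp [actA, leg2, Fintype.sum_prod_type, ite_mul]

lemma H1 (haa : ∀ (k₁ k₂ : ℝ) (i j : Fin N),
      a i k₁ * a j k₂ =
        ∑ i' : Fin N, ∑ j' : Fin N,
          R k₂ k₁ (j, i) (j', i') • (a j' k₂ * a i' k₁)) (s t : ℝ) :
    (fun p : Fin N × Fin N => a p.1 s * a p.2 t) =
      actA (cmap A (flipM (R t s))) (vaa a s t) := by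
  funext p
  rw [haa s t p.1 p.2]
  simp [actA, cmap, flipM, Matrix.map_apply, vaa, Fintype.sum_prod_type, alg_mul]

lemma W_apply (s t : ℝ) (p : Fin N × Fin N) (r n : Fin N) :
    (cmap A (flipM (R t s)) * leg2 (bmat b t) * cmap A (R s (-t))) p (r, n)
      = ∑ i₁, ∑ m₁, ∑ m₂,
          (R t s (p.2, p.1) (m₁, i₁) * R s (-t) (i₁, m₂) (r, n)) • (b m₁ m₂ t) := by
  simp [Matrix.mul_apply, cmap, leg2, bmat, flipM, Matrix.map_apply,
        Fintype.sum_prod_type, alg_mul, mul_alg, smul_smul, mul_ite, ite_mul,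
        zero_mul, mul_zero, Finset.mul_sum, Finset.sum_mul, smul_mul_assoc,
        mul_smul_comm]
  simp only [Finset.smul_sum, smul_smul]
  refine Finset.sum_congr rfl fun i₁ _ => ?_
  rw [Finset.sum_comm]
  exact Finset.sum_congr rfl fun m₁ _ => Finset.sum_congr rfl fun m₂ _ => by
    rw [mul_comm]

lemma W'_apply (s t : ℝ) (p q : Fin N × Fin N) :
    (cmap A (R s t) * leg1 (bmat b s) * cmap A (flipM (R t (-s)))) p q
      = ∑ j₁, ∑ m₁, ∑ m₂,
          (R s t p (m₁, j₁) * R t (-s) (j₁, m₂) (q.2, q.1)) • (b m₁ m₂ s) := by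
  simp [Matrix.mul_apply, cmap, leg1, bmat, flipM, Matrix.map_apply,
        Fintype.sum_prod_type, alg_mul, mul_alg, smul_smul, mul_ite, ite_mul,
        zero_mul, mul_zero, Finset.mul_sum, Finset.sum_mul, smul_mul_assoc,
        mul_smul_comm, Finset.smul_sum]
  rw [Finset.sum_comm]
  refine Finset.sum_congr rfl fun j₁ _ => ?_
  rw [Finset.sum_comm]
  exact Finset.sum_congr rfl fun m₁ _ => Finset.sum_congr rfl fun m₂ _ => by
    rw [mul_comm]

omit [Algebra ℂ A] in
lemma sum_rot4 {β : Type*} [AddCommMonoid β]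
    (f : Fin N → Fin N → Fin N → Fin N → β) :
    ∑ r, ∑ i₁, ∑ m₁, ∑ m₂, f r i₁ m₁ m₂
      = ∑ i₁, ∑ m₁, ∑ m₂, ∑ r, f r i₁ m₁ m₂ := by
  rw [Finset.sum_comm]
  refine Finset.sum_congr rfl fun i₁ _ => ?_
  rw [Finset.sum_comm]
  exact Finset.sum_congr rfl fun m₁ _ => Finset.sum_comm

lemma H2 (hab : ∀ (k₁ k₂ : ℝ) (i m n : Fin N),
      a i k₁ * b m n k₂ =
        ∑ i₁ : Fin N, ∑ m₁ : Fin N, ∑ m₂ : Fin N, ∑ i₂ : Fin N,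
          (R k₂ k₁ (m, i) (m₁, i₁) * R k₁ (-k₂) (i₁, m₂) (i₂, n)) •
            (b m₁ m₂ k₂ * a i₂ k₁))
    (s t : ℝ) (p : Fin N × Fin N) (n : Fin N) :
    a p.1 s * b p.2 n t
      = ∑ r, (cmap A (flipM (R t s)) * leg2 (bmat b t) * cmap A (R s (-t)))
          p (r, n) * a r s := by
  rw [hab s t p.1 p.2 n]
  simp only [W_apply R b, Finset.sum_mul, smul_mul_assoc]
  conv_rhs => rw [sum_rot4]

lemma H2' (hab : ∀ (k₁ k₂ : ℝ) (i m n : Fin N),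
      a i k₁ * b m n k₂ =
        ∑ i₁ : Fin N, ∑ m₁ : Fin N, ∑ m₂ : Fin N, ∑ i₂ : Fin N,
          (R k₂ k₁ (m, i) (m₁, i₁) * R k₁ (-k₂) (i₁, m₂) (i₂, n)) •
            (b m₁ m₂ k₂ * a i₂ k₁))
    (s t : ℝ) (p : Fin N × Fin N) (n : Fin N) :
    a p.2 t * b p.1 n s
      = ∑ r, (cmap A (R s t) * leg1 (bmat b s) * cmap A (flipM (R t (-s))))
          p (n, r) * a r t := by
  rw [hab t s p.2 p.1 n]
  simp only [W'_apply R b, Finset.sum_mul, smul_mul_assoc]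
  conv_rhs => rw [sum_rot4]

lemma CoreL2
    (haa : ∀ (k₁ k₂ : ℝ) (i j : Fin N),
      a i k₁ * a j k₂ =
        ∑ i' : Fin N, ∑ j' : Fin N,
          R k₂ k₁ (j, i) (j', i') • (a j' k₂ * a i' k₁))
    (hab : ∀ (k₁ k₂ : ℝ) (i m n : Fin N),
      a i k₁ * b m n k₂ =
        ∑ i₁ : Fin N, ∑ m₁ : Fin N, ∑ m₂ : Fin N, ∑ i₂ : Fin N,
          (R k₂ k₁ (m, i) (m₁, i₁) * R k₁ (-k₂) (i₁, m₂) (i₂, n)) •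
            (b m₁ m₂ k₂ * a i₂ k₁))
    (hunit : ∀ k₁ k₂ : ℝ, R k₁ k₂ * flipM (R k₂ k₁) = 1) (s t : ℝ) :
    (fun p : Fin N × Fin N => a p.1 s * (∑ n, b p.2 n t * a n (-t)))
      = actA (cmap A (flipM (R t s)) * leg2 (bmat b t)) (vaa a s (-t)) := by
  funext p
  have step1 : a p.1 s * (∑ n, b p.2 n t * a n (-t))
      = actA (cmap A (flipM (R t s)) * leg2 (bmat b t) * cmap A (R s (-t)))
          (fun q : Fin N × Fin N => a q.1 s * a q.2 (-t)) p := by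
    rw [Finset.mul_sum]
    calc ∑ n, a p.1 s * (b p.2 n t * a n (-t))
        = ∑ n, (a p.1 s * b p.2 n t) * a n (-t) := by
          simp only [mul_assoc]
      _ = ∑ n, (∑ r, (cmap A (flipM (R t s)) * leg2 (bmat b t) *
            cmap A (R s (-t))) p (r, n) * a r s) * a n (-t) := by
          simp only [← H2 R a b hab s t p]
      _ = ∑ n, ∑ r, (cmap A (flipM (R t s)) * leg2 (bmat b t) *
            cmap A (R s (-t))) p (r, n) * (a r s * a n (-t)) := by
          simp only [Finset.sum_mul, mul_assoc]
      _ = _ := by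
          rw [actA, Fintype.sum_prod_type]
          exact Finset.sum_comm
  rw [step1, H1 R a haa s (-t), ← actA_mul,
    mul_assoc (cmap A (flipM (R t s)) * leg2 (bmat b t)),
    cA_unit₁ R hunit s (-t), mul_one]

lemma CoreL3
    (hab : ∀ (k₁ k₂ : ℝ) (i m n : Fin N),
      a i k₁ * b m n k₂ =
        ∑ i₁ : Fin N, ∑ m₁ : Fin N, ∑ m₂ : Fin N, ∑ i₂ : Fin N,
          (R k₂ k₁ (m, i) (m₁, i₁) * R k₁ (-k₂) (i₁, m₂) (i₂, n)) •
            (b m₁ m₂ k₂ * a i₂ k₁))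
    (s t : ℝ) :
    (fun p : Fin N × Fin N => a p.2 t * (∑ m, b p.1 m s * a m (-s)))
      = actA (cmap A (R s t) * leg1 (bmat b s) * cmap A (flipM (R t (-s))))
          (vaa a (-s) t) := by
  funext p
  rw [Finset.mul_sum]
  calc ∑ m, a p.2 t * (b p.1 m s * a m (-s))
      = ∑ m, (a p.2 t * b p.1 m s) * a m (-s) := by
        simp only [mul_assoc]
    _ = ∑ m, (∑ r, (cmap A (R s t) * leg1 (bmat b s) *
          cmap A (flipM (R t (-s)))) p (m, r) * a r t) * a m (-s) := by
        simp only [← H2' R a b hab s t p]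
    _ = ∑ m, ∑ r, (cmap A (R s t) * leg1 (bmat b s) *
          cmap A (flipM (R t (-s)))) p (m, r) * (a r t * a m (-s)) := by
        simp only [Finset.sum_mul, mul_assoc]
    _ = _ := by
        rw [actA, Fintype.sum_prod_type]
        rfl

lemma hrefl2
    (hunit : ∀ k₁ k₂ : ℝ, R k₁ k₂ * flipM (R k₂ k₁) = 1)
    (hrefl : ∀ k₁ k₂ : ℝ,
      cmap A (R k₁ k₂) * leg1 (bmat b k₁) * cmap A (flipM (R k₂ (-k₁))) *
          leg2 (bmat b k₂) =
        leg2 (bmat b k₂) * cmap A (R k₁ (-k₂)) * leg1 (bmat b k₁) *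
          cmap A (flipM (R (-k₂) (-k₁)))) (k₁ k₂ : ℝ) :
    leg1 (bmat b k₁) * (cmap A (flipM (R k₂ (-k₁))) * leg2 (bmat b k₂))
      = cmap A (flipM (R k₂ k₁)) *
          (leg2 (bmat b k₂) *
            (cmap A (R k₁ (-k₂)) * leg1 (bmat b k₁) *
              cmap A (flipM (R (-k₂) (-k₁))))) := by
  have h := hrefl k₁ k₂
  calc leg1 (bmat b k₁) * (cmap A (flipM (R k₂ (-k₁))) * leg2 (bmat b k₂))
      = cmap A (flipM (R k₂ k₁)) * cmap A (R k₁ k₂) * leg1 (bmat b k₁) *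
          cmap A (flipM (R k₂ (-k₁))) * leg2 (bmat b k₂) := by
        rw [cA_unit₂ R hunit k₁ k₂, one_mul, mul_assoc]
    _ = cmap A (flipM (R k₂ k₁)) * (cmap A (R k₁ k₂) * leg1 (bmat b k₁) *
          cmap A (flipM (R k₂ (-k₁))) * leg2 (bmat b k₂)) := by
        simp only [mul_assoc]
    _ = cmap A (flipM (R k₂ k₁)) * (leg2 (bmat b k₂) * cmap A (R k₁ (-k₂)) *
          leg1 (bmat b k₁) * cmap A (flipM (R (-k₂) (-k₁)))) := by rw [h]
    _ = _ := by simp only [mul_assoc]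

variable (haa : ∀ (k₁ k₂ : ℝ) (i j : Fin N),
      a i k₁ * a j k₂ =
        ∑ i' : Fin N, ∑ j' : Fin N,
          R k₂ k₁ (j, i) (j', i') • (a j' k₂ * a i' k₁))
  (hab : ∀ (k₁ k₂ : ℝ) (i m n : Fin N),
      a i k₁ * b m n k₂ =
        ∑ i₁ : Fin N, ∑ m₁ : Fin N, ∑ m₂ : Fin N, ∑ i₂ : Fin N,
          (R k₂ k₁ (m, i) (m₁, i₁) * R k₁ (-k₂) (i₁, m₂) (i₂, n)) •
            (b m₁ m₂ k₂ * a i₂ k₁))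
  (hunit : ∀ k₁ k₂ : ℝ, R k₁ k₂ * flipM (R k₂ k₁) = 1)

include haa hab hunit in
lemma L2final (k₁ k₂ : ℝ) :
    (fun p : Fin N × Fin N => a p.1 k₁ * (∑ n, b p.2 n k₂ * a n (-k₂)))
      = actA (cmap A (flipM (R k₂ k₁)))
          (fun q : Fin N × Fin N =>
            (∑ n, b q.2 n k₂ * a n (-k₂)) * a q.1 k₁) := by
  rw [CoreL2 R a b haa hab hunit k₁ k₂, actA_mul]
  have hv : actA (leg2 (bmat b k₂)) (vaa a k₁ (-k₂))
      = (fun q : Fin N × Fin N => (∑ n, b q.2 n k₂ * a n (-k₂)) * a q.1 k₁) := by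
    funext q
    rw [actA_leg2]
    simp [vaa, Finset.sum_mul, mul_assoc, bmat]
  rw [hv]

include haa hab hunit in
lemma L3final (k₁ k₂ : ℝ) :
    (fun p : Fin N × Fin N => (∑ m, b p.1 m k₁ * a m (-k₁)) * a p.2 k₂)
      = actA (cmap A (flipM (R k₂ k₁)))
          (fun q : Fin N × Fin N =>
            a q.2 k₂ * (∑ m, b q.1 m k₁ * a m (-k₁))) := by
  rw [CoreL3 R a b hab k₁ k₂, ← actA_mul]
  have hm : cmap A (flipM (R k₂ k₁)) * (cmap A (R k₁ k₂) * leg1 (bmat b k₁) *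
      cmap A (flipM (R k₂ (-k₁))))
      = leg1 (bmat b k₁) * cmap A (flipM (R k₂ (-k₁))) := by
    simp only [← mul_assoc]
    rw [cA_unit₂ R hunit k₁ k₂, one_mul]
  rw [hm, actA_mul, ← H1 R a haa (-k₁) k₂]
  funext p
  rw [actA_leg1]
  simp [Finset.sum_mul, mul_assoc, bmat]

include haa hab hunit in
lemma L4final
    (hrefl : ∀ k₁ k₂ : ℝ,
      cmap A (R k₁ k₂) * leg1 (bmat b k₁) * cmap A (flipM (R k₂ (-k₁))) *
          leg2 (bmat b k₂) =
        leg2 (bmat b k₂) * cmap A (R k₁ (-k₂)) * leg1 (bmat b k₁) *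
          cmap A (flipM (R (-k₂) (-k₁)))) (k₁ k₂ : ℝ) :
    (fun p : Fin N × Fin N =>
        (∑ m, b p.1 m k₁ * a m (-k₁)) * (∑ n, b p.2 n k₂ * a n (-k₂)))
      = actA (cmap A (flipM (R k₂ k₁)))
          (fun q : Fin N × Fin N =>
            (∑ n, b q.2 n k₂ * a n (-k₂)) * (∑ m, b q.1 m k₁ * a m (-k₁))) := by
  have lhs_eq : (fun p : Fin N × Fin N =>
        (∑ m, b p.1 m k₁ * a m (-k₁)) * (∑ n, b p.2 n k₂ * a n (-k₂)))
      = actA (leg1 (bmat b k₁) *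
          (cmap A (flipM (R k₂ (-k₁))) * leg2 (bmat b k₂)))
          (vaa a (-k₁) (-k₂)) := by
    rw [actA_mul, ← CoreL2 R a b haa hab hunit (-k₁) k₂]
    funext p
    rw [actA_leg1]
    simp [Finset.sum_mul, mul_assoc, bmat]
  have rhs_eq : (fun q : Fin N × Fin N =>
        (∑ n, b q.2 n k₂ * a n (-k₂)) * (∑ m, b q.1 m k₁ * a m (-k₁)))
      = actA (leg2 (bmat b k₂) *
          (cmap A (R k₁ (-k₂)) * leg1 (bmat b k₁) *
            cmap A (flipM (R (-k₂) (-k₁)))))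
          (vaa a (-k₁) (-k₂)) := by
    rw [actA_mul, ← CoreL3 R a b hab k₁ (-k₂)]
    funext q
    rw [actA_leg2]
    simp [Finset.sum_mul, mul_assoc, bmat]
  rw [lhs_eq, rhs_eq, ← actA_mul, hrefl2 R b hunit hrefl k₁ k₂]

include haa hab hunit in
lemma Lsum
    (hrefl : ∀ k₁ k₂ : ℝ,
      cmap A (R k₁ k₂) * leg1 (bmat b k₁) * cmap A (flipM (R k₂ (-k₁))) *
          leg2 (bmat b k₂) =
        leg2 (bmat b k₂) * cmap A (R k₁ (-k₂)) * leg1 (bmat b k₁) *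
          cmap A (flipM (R (-k₂) (-k₁)))) (k₁ k₂ : ℝ) :
    (fun p : Fin N × Fin N =>
        (a p.1 k₁ + ∑ m, b p.1 m k₁ * a m (-k₁)) *
          (a p.2 k₂ + ∑ n, b p.2 n k₂ * a n (-k₂)))
      = actA (cmap A (flipM (R k₂ k₁)))
          (fun q : Fin N × Fin N =>
            (a q.2 k₂ + ∑ n, b q.2 n k₂ * a n (-k₂)) *
              (a q.1 k₁ + ∑ m, b q.1 m k₁ * a m (-k₁))) := by
  funext p
  have e1 := congrFun (H1 R a haa k₁ k₂) p
  have e2 := congrFun (L2final R a b haa hab hunit k₁ k₂) p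
  have e3 := congrFun (L3final R a b haa hab hunit k₁ k₂) p
  have e4 := congrFun (L4final R a b haa hab hunit hrefl k₁ k₂) p
  simp only [add_mul, mul_add]
  rw [e1, e2, e3, e4]
  simp only [actA, vaa, mul_add, add_mul, Finset.sum_add_distrib]
  abel

include haa hab hunit in
lemma final_pointwise
    (hrefl : ∀ k₁ k₂ : ℝ,
      cmap A (R k₁ k₂) * leg1 (bmat b k₁) * cmap A (flipM (R k₂ (-k₁))) *
          leg2 (bmat b k₂) =
        leg2 (bmat b k₂) * cmap A (R k₁ (-k₂)) * leg1 (bmat b k₁) *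
          cmap A (flipM (R (-k₂) (-k₁)))) (k₁ k₂ : ℝ) (i j : Fin N) :
    tilA a b i k₁ * tilA a b j k₂ =
      ∑ i' : Fin N, ∑ j' : Fin N,
        R k₂ k₁ (j, i) (j', i') • (tilA a b j' k₂ * tilA a b i' k₁) := by
  have main := congrFun (Lsum R a b haa hab hunit hrefl k₁ k₂) (i, j)
  simp only [tilA, smul_mul_smul_comm, smul_smul]
  rw [main]
  simp only [actA, cmap, flipM, Matrix.map_apply, Matrix.of_apply,
    Fintype.sum_prod_type, alg_mul, smul_smul, Finset.smul_sum]
  refine Finset.sum_congr rfl fun i' _ => Finset.sum_congr rfl fun j' _ => ?_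
  rw [mul_comm]


end Core

/-- given `a₁ a₂ = R₂₁ a₂ a₁`, `a₁ b₂ = R₂₁ b₂ R'₁₂ a₁`, the
reflection equation for `b`, and unitarity of `R`, the elements
`ã(k) = ½(a(k) + b(k) a(−k))` satisfy `ã₁(k₁) ã₂(k₂) = R₂₁(k₂,k₁) ã₂(k₂) ã₁(k₁)`. -/
theorem tilde_a_exchange {N : ℕ} {A : Type*} [Ring A] [Algebra ℂ A]
    (R : ℝ → ℝ → TwoLeg N ℂ)
    (a : Fin N → ℝ → A) (b : Fin N → Fin N → ℝ → A)
    (hunit : ∀ k₁ k₂ : ℝ, R k₁ k₂ * flipM (R k₂ k₁) = 1)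
    (haa : ∀ (k₁ k₂ : ℝ) (i j : Fin N),
      a i k₁ * a j k₂ =
        ∑ i' : Fin N, ∑ j' : Fin N,
          R k₂ k₁ (j, i) (j', i') • (a j' k₂ * a i' k₁))
    (hab : ∀ (k₁ k₂ : ℝ) (i m n : Fin N),
      a i k₁ * b m n k₂ =
        ∑ i₁ : Fin N, ∑ m₁ : Fin N, ∑ m₂ : Fin N, ∑ i₂ : Fin N,
          (R k₂ k₁ (m, i) (m₁, i₁) * R k₁ (-k₂) (i₁, m₂) (i₂, n)) •
            (b m₁ m₂ k₂ * a i₂ k₁))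
    (hrefl : ∀ k₁ k₂ : ℝ,
      cmap A (R k₁ k₂) * leg1 (bmat b k₁) * cmap A (flipM (R k₂ (-k₁))) *
          leg2 (bmat b k₂) =
        leg2 (bmat b k₂) * cmap A (R k₁ (-k₂)) * leg1 (bmat b k₁) *
          cmap A (flipM (R (-k₂) (-k₁)))) :
    ∀ (k₁ k₂ : ℝ) (i j : Fin N),
      tilA a b i k₁ * tilA a b j k₂ =
        ∑ i' : Fin N, ∑ j' : Fin N,
          R k₂ k₁ (j, i) (j', i') • (tilA a b j' k₂ * tilA a b i' k₁) := by
  intro k₁ k₂ i j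
  exact final_pointwise R a b haa hab hunit hrefl k₁ k₂ i j
end

section
/- Under the boundary algebra relations (discretized), the even Hamiltonians H^(2n) := ∑_{k∈K} k^(2n) ã†(k)·ã(k) satisfy [H^(2n), ã†(p)] = p^(2n) ã†(p) and [H^(2n), ã(p)] = −p^(2n) ã(p) for each p ∈ K. -/
open Matrix

/-- The discretized Hamiltonian `H^(m) = ∑_{k∈K} k^m ã†(k)·ã(k)`. -/
noncomputable def Ham {N : ℕ} {A : Type*} [Ring A] [Algebra ℂ A]
    (K : Finset ℝ) (m : ℕ) (ta tadag : Fin N → ℝ → A) : A :=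
  ∑ k ∈ K, ((k : ℂ) ^ m) • ∑ i : Fin N, tadag i k * ta i k

lemma unit_entry {N : ℕ} (R : ℝ → ℝ → TwoLeg N ℂ)
    (hunit : ∀ k₁ k₂ : ℝ, R k₁ k₂ * flipM (R k₂ k₁) = 1)
    (p k : ℝ) (a c : Fin N × Fin N) :
    ∑ x : Fin N, ∑ y : Fin N, R p k a (x, y) * R k p (y, x) (c.2, c.1)
      = if a = c then 1 else 0 := by
  have h := Matrix.ext_iff.mpr (hunit p k) a c
  rw [Matrix.mul_apply, Fintype.sum_prod_type] at h
  simpa [flipM, Matrix.one_apply] using h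

lemma sum5A {β : Type*} [AddCommMonoid β] {n : ℕ}
    (f : Fin n → Fin n → Fin n → Fin n → Fin n → β) :
    ∑ a, ∑ b, ∑ c, ∑ d, ∑ e, f a b c d e
      = ∑ b, ∑ d, ∑ e, ∑ a, ∑ c, f a b c d e := by
  have h1 : (∑ a, ∑ b, ∑ c, ∑ d, ∑ e, f a b c d e)
      = ∑ x : Fin n × Fin n × Fin n × Fin n × Fin n,
          f x.1 x.2.1 x.2.2.1 x.2.2.2.1 x.2.2.2.2 := by
    simp [Fintype.sum_prod_type]
  have h2 : (∑ b, ∑ d, ∑ e, ∑ a, ∑ c, f a b c d e)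
      = ∑ x : Fin n × Fin n × Fin n × Fin n × Fin n,
          f x.2.2.2.1 x.1 x.2.2.2.2 x.2.1 x.2.2.1 := by
    simp [Fintype.sum_prod_type]
  rw [h1, h2]
  exact Fintype.sum_equiv
    ⟨fun x => (x.2.1, x.2.2.2.1, x.2.2.2.2, x.1, x.2.2.1),
     fun y => (y.2.2.2.1, y.1, y.2.2.2.2, y.2.1, y.2.2.1),
     fun x => rfl, fun y => rfl⟩ _ _ (fun x => rfl)

lemma sum5B {β : Type*} [AddCommMonoid β] {n : ℕ}
    (f : Fin n → Fin n → Fin n → Fin n → Fin n → β) :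
    ∑ a, ∑ b, ∑ c, ∑ d, ∑ e, f a b c d e
      = ∑ c, ∑ d, ∑ e, ∑ b, ∑ a, f a b c d e := by
  have h1 : (∑ a, ∑ b, ∑ c, ∑ d, ∑ e, f a b c d e)
      = ∑ x : Fin n × Fin n × Fin n × Fin n × Fin n,
          f x.1 x.2.1 x.2.2.1 x.2.2.2.1 x.2.2.2.2 := by
    simp [Fintype.sum_prod_type]
  have h2 : (∑ c, ∑ d, ∑ e, ∑ b, ∑ a, f a b c d e)
      = ∑ x : Fin n × Fin n × Fin n × Fin n × Fin n,
          f x.2.2.2.2 x.2.2.2.1 x.1 x.2.1 x.2.2.1 := by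
    simp [Fintype.sum_prod_type]
  rw [h1, h2]
  exact Fintype.sum_equiv
    ⟨fun x => (x.2.2.1, x.2.2.2.1, x.2.2.2.2, x.2.1, x.1),
     fun y => (y.2.2.2.2, y.2.2.2.1, y.1, y.2.1, y.2.2.1),
     fun x => rfl, fun y => rfl⟩ _ _ (fun x => rfl)

lemma commA {N : ℕ} {A : Type*} [Ring A] [Algebra ℂ A]
    (R : ℝ → ℝ → TwoLeg N ℂ)
    (ta tadag : Fin N → ℝ → A) (b : Fin N → Fin N → ℝ → A)
    (hunit : ∀ k₁ k₂ : ℝ, R k₁ k₂ * flipM (R k₂ k₁) = 1)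
    (hadad : ∀ (k₁ k₂ : ℝ) (i j : Fin N),
      tadag i k₁ * tadag j k₂ =
        ∑ i' : Fin N, ∑ j' : Fin N,
          R k₂ k₁ (j', i') (j, i) • (tadag j' k₂ * tadag i' k₁))
    (haad : ∀ (k₁ k₂ : ℝ) (i j : Fin N),
      ta i k₁ * tadag j k₂ =
        (∑ i' : Fin N, ∑ j' : Fin N,
          R k₁ k₂ (i, j') (i', j) • (tadag j' k₂ * ta i' k₁)) +
        ((2 : ℂ)⁻¹) • (if k₁ = k₂ ∧ i = j then (1 : A) else 0) +
        ((2 : ℂ)⁻¹) • (if k₁ = -k₂ then b i j k₁ else 0))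
    (hrho1 : ∀ (i : Fin N) (k : ℝ),
      ∑ j : Fin N, tadag j (-k) * b j i (-k) = tadag i k)
    (k p : ℝ) (j : Fin N) :
    (∑ i, tadag i k * ta i k) * tadag j p
      = tadag j p * (∑ i, tadag i k * ta i k)
        + ((2:ℂ)⁻¹ * (if k = p then 1 else 0)
            + (2:ℂ)⁻¹ * (if k = -p then 1 else 0)) • tadag j p := by
  have h1 : ∑ i, tadag i k *
        (∑ i', ∑ j', R k p (i, j') (i', j) • (tadag j' p * ta i' k))
      = tadag j p * ∑ i, tadag i k * ta i k := by
    simp_rw [Finset.mul_sum, mul_smul_comm, ← mul_assoc, hadad k p,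
      Finset.sum_mul, smul_mul_assoc, Finset.smul_sum, smul_smul]
    rw [sum5A]
    simp_rw [← Finset.sum_smul]
    have hsc : ∀ i' i'' j'' : Fin N,
        (∑ i, ∑ j', R k p (i, j') (i', j) * R p k (j'', i'') (j', i))
          = if j'' = j ∧ i'' = i' then 1 else 0 := by
      intro i' i'' j''
      rw [Finset.sum_comm]
      simp_rw [mul_comm (R k p _ _)]
      rw [unit_entry R hunit p k (j'', i'') (j, i')]
      simp [Prod.ext_iff]
    simp_rw [hsc, ite_smul, one_smul, zero_smul]
    simp [ite_and, Finset.sum_ite_eq, Finset.sum_ite_eq']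
  have h2 : ∑ i, tadag i k * ((2:ℂ)⁻¹ • (if k = p ∧ i = j then (1:A) else 0))
      = ((2:ℂ)⁻¹ * (if k = p then 1 else 0)) • tadag j p := by
    by_cases h : k = p
    · subst h
      simp [mul_smul_comm, mul_ite, mul_zero, mul_one, smul_ite, smul_zero,
        Finset.sum_ite_eq, Finset.sum_ite_eq', smul_smul]
    · simp [h]
  have h3 : ∑ i, tadag i k * ((2:ℂ)⁻¹ • (if k = -p then b i j k else 0))
      = ((2:ℂ)⁻¹ * (if k = -p then 1 else 0)) • tadag j p := by
    by_cases h : k = -p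
    · subst h
      simp only [if_pos rfl, if_true, mul_smul_comm, ← Finset.smul_sum]
      rw [hrho1 j p]
      simp [smul_smul]
    · simp [h]
  rw [Finset.sum_mul]
  simp_rw [mul_assoc, haad k p, mul_add, Finset.sum_add_distrib]
  rw [h1, h2, h3, add_smul, add_assoc]

lemma commB {N : ℕ} {A : Type*} [Ring A] [Algebra ℂ A]
    (R : ℝ → ℝ → TwoLeg N ℂ)
    (ta tadag : Fin N → ℝ → A) (b : Fin N → Fin N → ℝ → A)
    (hunit : ∀ k₁ k₂ : ℝ, R k₁ k₂ * flipM (R k₂ k₁) = 1)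
    (haa : ∀ (k₁ k₂ : ℝ) (i j : Fin N),
      ta i k₁ * ta j k₂ =
        ∑ i' : Fin N, ∑ j' : Fin N,
          R k₂ k₁ (j, i) (j', i') • (ta j' k₂ * ta i' k₁))
    (haad : ∀ (k₁ k₂ : ℝ) (i j : Fin N),
      ta i k₁ * tadag j k₂ =
        (∑ i' : Fin N, ∑ j' : Fin N,
          R k₁ k₂ (i, j') (i', j) • (tadag j' k₂ * ta i' k₁)) +
        ((2 : ℂ)⁻¹) • (if k₁ = k₂ ∧ i = j then (1 : A) else 0) +
        ((2 : ℂ)⁻¹) • (if k₁ = -k₂ then b i j k₁ else 0))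
    (hrho2 : ∀ (i : Fin N) (k : ℝ),
      ∑ j : Fin N, b i j k * ta j (-k) = ta i k)
    (k p : ℝ) (j : Fin N) :
    ta j p * (∑ i, tadag i k * ta i k)
      = (∑ i, tadag i k * ta i k) * ta j p
        + ((2:ℂ)⁻¹ * (if k = p then 1 else 0)
            + (2:ℂ)⁻¹ * (if k = -p then 1 else 0)) • ta j p := by
  have h1 : ∑ i, (∑ i', ∑ j', R p k (j, j') (i', i) • (tadag j' k * ta i' p)) * ta i k
      = (∑ i, tadag i k * ta i k) * ta j p := by
    simp_rw [Finset.sum_mul, smul_mul_assoc, mul_assoc, haa p k,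
      Finset.mul_sum, mul_smul_comm, Finset.smul_sum, smul_smul]
    rw [sum5B]
    simp_rw [← Finset.sum_smul]
    have hsc : ∀ j' i'' j'' : Fin N,
        (∑ i', ∑ i, R p k (j, j') (i', i) * R k p (i, i') (j'', i''))
          = if j = i'' ∧ j' = j'' then 1 else 0 := by
      intro j' i'' j''
      rw [unit_entry R hunit p k (j, j') (i'', j'')]
      simp [Prod.ext_iff]
    simp_rw [hsc, ite_smul, one_smul, zero_smul]
    simp [ite_and, Finset.sum_ite_eq, Finset.sum_ite_eq', Finset.sum_mul, mul_assoc]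
  have h2 : ∑ i, ((2:ℂ)⁻¹ • (if p = k ∧ j = i then (1:A) else 0)) * ta i k
      = ((2:ℂ)⁻¹ * (if k = p then 1 else 0)) • ta j p := by
    by_cases h : k = p
    · subst h
      simp [smul_mul_assoc, ite_mul, Finset.sum_ite_eq, Finset.sum_ite_eq', smul_smul]
    · have hp : ¬ p = k := fun hh => h hh.symm
      simp [h, hp]
  have h3 : ∑ i, ((2:ℂ)⁻¹ • (if p = -k then b j i p else 0)) * ta i k
      = ((2:ℂ)⁻¹ * (if k = -p then 1 else 0)) • ta j p := by
    by_cases h : k = -p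
    · have hp : p = -k := by rw [h, neg_neg]
      simp only [if_pos hp, if_pos h, smul_mul_assoc, ← Finset.smul_sum]
      rw [h]
      rw [hrho2 j p]
      simp
    · have hp : ¬ p = -k := fun hh => h (by rw [hh, neg_neg])
      simp [h, hp]
  rw [Finset.mul_sum]
  simp_rw [← mul_assoc, haad p k, add_mul, Finset.sum_add_distrib]
  rw [h1, h2, h3, add_smul, add_assoc]

/-- under the (discretized) boundary algebra relations, the even
Hamiltonians satisfy `[H^(2n), ã†(p)] = p^(2n) ã†(p)` and
`[H^(2n), ã(p)] = −p^(2n) ã(p)` for each `p ∈ K`. -/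
theorem even_hamiltonian_commutators {N : ℕ} {A : Type*} [Ring A] [Algebra ℂ A]
    (R : ℝ → ℝ → TwoLeg N ℂ)
    (K : Finset ℝ) (hK : ∀ k ∈ K, -k ∈ K)
    (ta tadag : Fin N → ℝ → A) (b : Fin N → Fin N → ℝ → A)
    (hunit : ∀ k₁ k₂ : ℝ, R k₁ k₂ * flipM (R k₂ k₁) = 1)
    (haa : ∀ (k₁ k₂ : ℝ) (i j : Fin N),
      ta i k₁ * ta j k₂ =
        ∑ i' : Fin N, ∑ j' : Fin N,
          R k₂ k₁ (j, i) (j', i') • (ta j' k₂ * ta i' k₁))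
    (hadad : ∀ (k₁ k₂ : ℝ) (i j : Fin N),
      tadag i k₁ * tadag j k₂ =
        ∑ i' : Fin N, ∑ j' : Fin N,
          R k₂ k₁ (j', i') (j, i) • (tadag j' k₂ * tadag i' k₁))
    (haad : ∀ (k₁ k₂ : ℝ) (i j : Fin N),
      ta i k₁ * tadag j k₂ =
        (∑ i' : Fin N, ∑ j' : Fin N,
          R k₁ k₂ (i, j') (i', j) • (tadag j' k₂ * ta i' k₁)) +
        ((2 : ℂ)⁻¹) • (if k₁ = k₂ ∧ i = j then (1 : A) else 0) +
        ((2 : ℂ)⁻¹) • (if k₁ = -k₂ then b i j k₁ else 0))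
    (hrho1 : ∀ (i : Fin N) (k : ℝ),
      ∑ j : Fin N, tadag j (-k) * b j i (-k) = tadag i k)
    (hrho2 : ∀ (i : Fin N) (k : ℝ),
      ∑ j : Fin N, b i j k * ta j (-k) = ta i k) :
    ∀ n : ℕ, ∀ p ∈ K, ∀ i : Fin N,
      (Ham K (2 * n) ta tadag * tadag i p - tadag i p * Ham K (2 * n) ta tadag =
        ((p : ℂ) ^ (2 * n)) • tadag i p) ∧
      (Ham K (2 * n) ta tadag * ta i p - ta i p * Ham K (2 * n) ta tadag =
        -(((p : ℂ) ^ (2 * n)) • ta i p)) := by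
  intro n p hp j
  have hEv : ((-(p:ℝ) : ℝ) : ℂ) ^ (2 * n) = (p : ℂ) ^ (2 * n) := by
    push_cast
    rw [Even.neg_pow (even_two_mul n)]
  have hscal : ∑ k ∈ K, ((k:ℂ) ^ (2 * n) *
      ((2:ℂ)⁻¹ * (if k = p then 1 else 0) + (2:ℂ)⁻¹ * (if k = -p then 1 else 0)))
      = (p : ℂ) ^ (2 * n) := by
    simp_rw [mul_add, mul_ite, mul_one, mul_zero]
    rw [Finset.sum_add_distrib, Finset.sum_ite_eq' K p, Finset.sum_ite_eq' K (-p),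
      if_pos hp, if_pos (hK p hp), hEv]
    ring
  constructor
  · unfold Ham
    rw [Finset.sum_mul, Finset.mul_sum, ← Finset.sum_sub_distrib]
    have hterm : ∀ k ∈ K,
        ((k:ℂ) ^ (2 * n)) • (∑ i : Fin N, tadag i k * ta i k) * tadag j p -
          tadag j p * (((k:ℂ) ^ (2 * n)) • ∑ i : Fin N, tadag i k * ta i k)
        = ((k:ℂ) ^ (2 * n) *
            ((2:ℂ)⁻¹ * (if k = p then 1 else 0) + (2:ℂ)⁻¹ * (if k = -p then 1 else 0)))
            • tadag j p := by
      intro k _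
      rw [smul_mul_assoc, mul_smul_comm,
        commA R ta tadag b hunit hadad haad hrho1 k p j,
        smul_add, add_sub_cancel_left, smul_smul]
    rw [Finset.sum_congr rfl hterm, ← Finset.sum_smul, hscal]
  · unfold Ham
    rw [Finset.sum_mul, Finset.mul_sum, ← Finset.sum_sub_distrib]
    have hterm : ∀ k ∈ K,
        ((k:ℂ) ^ (2 * n)) • (∑ i : Fin N, tadag i k * ta i k) * ta j p -
          ta j p * (((k:ℂ) ^ (2 * n)) • ∑ i : Fin N, tadag i k * ta i k)
        = -(((k:ℂ) ^ (2 * n) *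
            ((2:ℂ)⁻¹ * (if k = p then 1 else 0) + (2:ℂ)⁻¹ * (if k = -p then 1 else 0)))
            • ta j p) := by
      intro k _
      rw [smul_mul_assoc, mul_smul_comm,
        commB R ta tadag b hunit haa haad hrho2 k p j,
        smul_add, smul_smul]
      abel
    rw [Finset.sum_congr rfl hterm]
    simp_rw [← neg_smul, ← Finset.sum_smul]
    rw [Finset.sum_neg_distrib, hscal]
end
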